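/- Quantum MacWilliams identity (Shor–Laflamme): let M₁, M₂ be Hermitian q^n×q^n complex matrices. Then for all w, z ∈ ℂ, B(w,z; M₁, M₂) = A((w + (q²−1)z)/q, (w−z)/q; M₁, M₂). -/

import Mathlib

open Matrix Polynomial
open scoped BigOperators ComplexConjugate Kronecker

noncomputable section

/-- Generalized Pauli `X` (cyclic shift) on `ℂ^q`. -/
def Xmat (q : ℕ) : Matrix (Fin q) (Fin q) ℂ :=
  fun i j => if (i : ℕ) = ((j : ℕ) + 1) % q then 1 else 0

/-- Generalized Pauli `Z` (clock) on `ℂ^q`, `Z|j⟩ = ζ^j |j⟩` with `ζ = exp(2πi/q)`. -/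
def Zmat (q : ℕ) : Matrix (Fin q) (Fin q) ℂ :=
  Matrix.diagonal fun j => Complex.exp (2 * (Real.pi : ℂ) * Complex.I / (q : ℂ)) ^ (j : ℕ)

/-- Single-qudit Pauli `E(a,b) = X^a Z^b` for a label `(a,b) ∈ (ℤ/qℤ)²`. -/
def Epauli (q : ℕ) (p : ZMod q × ZMod q) : Matrix (Fin q) (Fin q) ℂ :=
  Xmat q ^ p.1.val * Zmat q ^ p.2.val

/-- Multi-qudit Pauli `E(p) = E(p₁) ⊗ ⋯ ⊗ E(pₙ)` on the space indexed by `ι → Fin q`. -/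
def EV (q : ℕ) {ι : Type} [Fintype ι] (p : ι → ZMod q × ZMod q) :
    Matrix (ι → Fin q) (ι → Fin q) ℂ :=
  fun v w => ∏ i, Epauli q (p i) (v i) (w i)

/-- Weight of a Pauli label vector: the number of non-identity factors. -/
def wtL (q : ℕ) {ι : Type} [Fintype ι] (p : ι → ZMod q × ZMod q) : ℕ :=
  (Finset.univ.filter fun i => p i ≠ 0).card

/-- Homogeneous Shor–Laflamme `A`-enumerator, as a function of `(w, z) ∈ ℂ²`. -/
def enumAhom (q n : ℕ) [NeZero q] (M₁ M₂ : Matrix ((Fin n) → Fin q) ((Fin n) → Fin q) ℂ)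
    (w z : ℂ) : ℂ :=
  ∑ p : Fin n → ZMod q × ZMod q,
    Matrix.trace ((EV q p)ᴴ * M₁) * Matrix.trace (EV q p * M₂) *
      w ^ (n - wtL q p) * z ^ wtL q p

/-- Homogeneous Shor–Laflamme `B`-enumerator, as a function of `(w, z) ∈ ℂ²`. -/
def enumBhom (q n : ℕ) [NeZero q] (M₁ M₂ : Matrix ((Fin n) → Fin q) ((Fin n) → Fin q) ℂ)
    (w z : ℂ) : ℂ :=
  ∑ p : Fin n → ZMod q × ZMod q,
    Matrix.trace ((EV q p)ᴴ * M₁ * EV q p * M₂) *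
      w ^ (n - wtL q p) * z ^ wtL q p

namespace SLaux

variable (q : ℕ)

def zt : ℂ := Complex.exp (2 * (Real.pi : ℂ) * Complex.I / (q : ℂ))

def e (m : ℤ) : ℂ := zt q ^ m

lemma zt_ne_zero : zt q ≠ 0 := Complex.exp_ne_zero _

lemma prim [NeZero q] : IsPrimitiveRoot (zt q) q :=
  Complex.isPrimitiveRoot_exp q (NeZero.ne q)

lemma e_add (m m' : ℤ) : e q (m + m') = e q m * e q m' := zpow_add₀ (zt_ne_zero q) _ _

lemma e_zero : e q 0 = 1 := rfl

lemma e_one_iff [NeZero q] (m : ℤ) : e q m = 1 ↔ (q : ℤ) ∣ m :=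
  (prim q).zpow_eq_one_iff_dvd m

lemma e_congr [NeZero q] {m m' : ℤ} (h : (q : ℤ) ∣ m - m') : e q m = e q m' := by
  obtain ⟨k, hk⟩ := h
  have hm : m = m' + (q : ℤ) * k := by linarith
  rw [hm, e_add]
  have : e q ((q : ℤ) * k) = 1 := by
    rw [e, _root_.zpow_mul, zpow_natCast, (prim q).pow_eq_one, _root_.one_zpow]
  rw [this, mul_one]

lemma e_conj (m : ℤ) : (starRingEnd ℂ) (e q m) = e q (-m) := by
  unfold e zt
  rw [← Complex.exp_int_mul, ← Complex.exp_int_mul, ← Complex.exp_conj]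
  congr 1
  have : (starRingEnd ℂ) (2 * (Real.pi : ℂ) * Complex.I / (q : ℂ)) =
      -(2 * (Real.pi : ℂ) * Complex.I / (q : ℂ)) := by
    rw [map_div₀, _root_.map_mul, _root_.map_mul, Complex.conj_I]
    simp [neg_div, Complex.conj_ofNat]
  rw [_root_.map_mul (starRingEnd ℂ), this, map_intCast (starRingEnd ℂ) m]
  push_cast; ring

lemma sum_zmod [NeZero q] (f : ℕ → ℂ) : ∑ t : ZMod q, f t.val = ∑ j : Fin q, f j := by
  refine (Fintype.sum_bijective (fun j : Fin q => ((j : ℕ) : ZMod q)) ?_ _ _ ?_).symm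
  · constructor
    · intro a b hab
      have := congrArg ZMod.val hab
      rw [ZMod.val_natCast_of_lt a.isLt, ZMod.val_natCast_of_lt b.isLt] at this
      exact Fin.val_inj.mp this
    · intro x
      exact ⟨⟨x.val, ZMod.val_lt x⟩, ZMod.natCast_zmod_val x⟩
  · intro j
    rw [ZMod.val_natCast_of_lt j.isLt]

lemma char_sum [NeZero q] (m : ℤ) :
    ∑ t : ZMod q, e q ((t.val : ℤ) * m) = if (q : ℤ) ∣ m then (q : ℂ) else 0 := by
  split_ifs with h
  · rw [Finset.sum_congr rfl (fun t _ => (e_one_iff q _).mpr (Dvd.dvd.mul_left h _))]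
    simp [ZMod.card]
  · have hne : e q m ≠ 1 := fun hc => h ((e_one_iff q m).mp hc)
    have key : ∀ t : ZMod q, e q ((t.val : ℤ) * m) = (e q m) ^ (t.val) := by
      intro t; rw [e, e, ← zpow_natCast ((zt q)^m), ← _root_.zpow_mul, mul_comm]
    rw [Finset.sum_congr rfl (fun t _ => key t), sum_zmod q (fun j => (e q m) ^ j)]
    rw [Fin.sum_univ_eq_sum_range, geom_sum_eq hne]
    have : e q m ^ q = 1 := by
      rw [e, ← zpow_natCast, ← _root_.zpow_mul, mul_comm, _root_.zpow_mul, zpow_natCast,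
        (prim q).pow_eq_one, _root_.one_zpow]
    rw [this]; simp

variable [NeZero q]

lemma qpos : 0 < q := Nat.pos_of_ne_zero (NeZero.ne q)

lemma sum_fin_eq (m : ℕ) (hm : m < q) (f : Fin q → ℂ) :
    (∑ k : Fin q, if (k : ℕ) = m then f k else 0) = f ⟨m, hm⟩ := by
  have h : ∀ k : Fin q, ((k : ℕ) = m) = (k = ⟨m, hm⟩) := fun k => by
    simp [Fin.ext_iff]
  simp only [h]
  simp

lemma Xpow_apply (m : ℕ) (i j : Fin q) :
    (Xmat q ^ m) i j = if (i : ℕ) = ((j : ℕ) + m) % q then 1 else 0 := by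
  induction m generalizing i j with
  | zero =>
    rw [pow_zero, Matrix.one_apply, Nat.add_zero, Nat.mod_eq_of_lt j.isLt]
    simp [Fin.ext_iff]
  | succ m ih =>
    rw [pow_succ, Matrix.mul_apply]
    have hterm : ∀ k : Fin q, (Xmat q ^ m) i k * Xmat q k j
        = if (k : ℕ) = ((j : ℕ) + 1) % q then (Xmat q ^ m) i k else 0 := fun k => by
      rw [show Xmat q k j = if (k : ℕ) = ((j : ℕ) + 1) % q then 1 else 0 from rfl]
      split_ifs <;> simp
    rw [Finset.sum_congr rfl (fun k _ => hterm k),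
      sum_fin_eq q _ (Nat.mod_lt _ (qpos q)) (fun k => (Xmat q ^ m) i k), ih]
    simp only [Nat.mod_add_mod]
    rw [show (j : ℕ) + 1 + m = (j : ℕ) + (m + 1) from by omega]

lemma Epauli_apply (p : ZMod q × ZMod q) (i j : Fin q) :
    Epauli q p i j = if (i : ℕ) = ((j : ℕ) + p.1.val) % q
      then e q (((j : ℕ) : ℤ) * (p.2.val : ℤ)) else 0 := by
  have hfun : ((fun j : Fin q => Complex.exp (2 * (Real.pi : ℂ) * Complex.I / (q : ℂ)) ^ (j : ℕ)) ^ p.2.val)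
      = (fun j : Fin q => e q (((j : ℕ) : ℤ) * (p.2.val : ℤ))) := by
    funext k
    show (Complex.exp (2 * (Real.pi : ℂ) * Complex.I / (q : ℂ)) ^ (k : ℕ)) ^ p.2.val = _
    rw [show Complex.exp (2 * (Real.pi : ℂ) * Complex.I / (q : ℂ)) = zt q from rfl,
      ← pow_mul, e, ← zpow_natCast (zt q)]
    norm_cast
  have hz : Zmat q ^ p.2.val
      = Matrix.diagonal (fun j : Fin q => e q (((j : ℕ) : ℤ) * (p.2.val : ℤ))) := by
    rw [Zmat, Matrix.diagonal_pow, hfun]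
  rw [Epauli, hz, Matrix.mul_diagonal, Xpow_apply]
  split_ifs <;> simp

lemma Epauli_conj (p : ZMod q × ZMod q) (i j : Fin q) :
    (starRingEnd ℂ) (Epauli q p i j) = if (i : ℕ) = ((j : ℕ) + p.1.val) % q
      then e q (-(((j : ℕ) : ℤ) * (p.2.val : ℤ))) else 0 := by
  rw [Epauli_apply, apply_ite (starRingEnd ℂ), e_conj, map_zero]


lemma cond_iff (a b : Fin q) (u : ZMod q) :
    ((a : ℕ) = ((b : ℕ) + u.val) % q) ↔ u = ((a : ℕ) : ZMod q) - ((b : ℕ) : ZMod q) := by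
  have hv : ((((b : ℕ) : ZMod q) + u)).val = ((b : ℕ) + u.val) % q := by
    rw [ZMod.val_add, ZMod.val_natCast_of_lt b.isLt]
  constructor
  · intro h
    have h2 : ((a : ℕ) : ZMod q) = ((b : ℕ) : ZMod q) + u := by
      conv_lhs => rw [h, ← hv, ZMod.natCast_zmod_val]
    rw [h2, add_sub_cancel_left]
  · intro h
    rw [← hv, h, add_comm, sub_add_cancel, ZMod.val_natCast_of_lt a.isLt]

lemma complet (a b v w' : Fin q) :
    ∑ s : ZMod q × ZMod q, (starRingEnd ℂ) (Epauli q s a b) * Epauli q s v w'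
      = if a = v ∧ b = w' then (q : ℂ) else 0 := by
  have hterm : ∀ u t : ZMod q, (starRingEnd ℂ) (Epauli q (u, t) a b) * Epauli q (u, t) v w'
      = (if ((a : ℕ) = ((b : ℕ) + u.val) % q ∧ (v : ℕ) = ((w' : ℕ) + u.val) % q)
          then (1 : ℂ) else 0)
        * e q ((t.val : ℤ) * (((w' : ℕ) : ℤ) - ((b : ℕ) : ℤ))) := by
    intro u t
    rw [Epauli_conj, Epauli_apply]
    by_cases h1 : (a : ℕ) = ((b : ℕ) + u.val) % q <;>
      by_cases h2 : (v : ℕ) = ((w' : ℕ) + u.val) % q <;>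
      simp only [h1, h2, if_true, if_false, true_and, false_and, and_true, and_false,
        if_pos, one_mul, zero_mul, mul_zero] <;> try simp [h1, h2]
    rw [← e_add]
    congr 1
    push_cast
    ring
  rw [Fintype.sum_prod_type, Finset.sum_congr rfl
    (fun u _ => Finset.sum_congr rfl (fun t _ => hterm u t))]
  have hin : ∀ u : ZMod q, ∑ t : ZMod q,
      (if ((a : ℕ) = ((b : ℕ) + u.val) % q ∧ (v : ℕ) = ((w' : ℕ) + u.val) % q)
        then (1 : ℂ) else 0) * e q ((t.val : ℤ) * (((w' : ℕ) : ℤ) - ((b : ℕ) : ℤ)))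
      = (if ((a : ℕ) = ((b : ℕ) + u.val) % q ∧ (v : ℕ) = ((w' : ℕ) + u.val) % q)
        then (1 : ℂ) else 0) * (if b = w' then (q : ℂ) else 0) := by
    intro u
    rw [← Finset.mul_sum, char_sum]
    congr 1
    have hiff : ((q : ℤ) ∣ (((w' : ℕ) : ℤ) - ((b : ℕ) : ℤ))) ↔ b = w' := by
      constructor
      · intro hdvd
        have hb := b.isLt; have hw := w'.isLt
        have h0 : (((w' : ℕ) : ℤ) - ((b : ℕ) : ℤ)) = 0 := by
          refine Int.eq_zero_of_abs_lt_dvd hdvd ?_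
          rw [abs_lt]; omega
        have : (w' : ℕ) = (b : ℕ) := by omega
        exact (Fin.val_inj.mp this).symm
      · intro hbw; subst hbw; simp
    split_ifs with hd hb hb
    · rfl
    · exact absurd (hiff.mp hd) hb
    · exact absurd (hiff.mpr hb) hd
    · rfl
  rw [Finset.sum_congr rfl (fun u _ => hin u)]
  by_cases hbw : b = w'
  · subst hbw
    simp only [if_pos rfl]
    by_cases hav : a = v
    · subst hav
      have hcond : ∀ u : ZMod q,
          (((a : ℕ) = ((b : ℕ) + u.val) % q ∧ (a : ℕ) = ((b : ℕ) + u.val) % q))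
            = (u = ((a : ℕ) : ZMod q) - ((b : ℕ) : ZMod q)) := by
        intro u; rw [and_self, cond_iff]
      simp only [hcond]
      simp [ite_mul, Finset.sum_ite_eq']
    · have hfalse : ∀ u : ZMod q,
          ¬ ((a : ℕ) = ((b : ℕ) + u.val) % q ∧ (v : ℕ) = ((b : ℕ) + u.val) % q) := by
        intro u ⟨h1, h2⟩
        exact hav (Fin.val_inj.mp (h1.trans h2.symm))
      simp [hfalse, hav]
  · simp [hbw]

def sig (p s : ZMod q × ZMod q) : ℤ :=
  (p.1.val : ℤ) * (s.2.val : ℤ) - (p.2.val : ℤ) * (s.1.val : ℤ)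

lemma comm1 (p s : ZMod q × ZMod q) :
    (Epauli q p)ᴴ * Epauli q s * Epauli q p = e q (sig q p s) • Epauli q s := by
  ext i j
  have hk : ((i : ℕ) + p.1.val) % q < q := Nat.mod_lt _ (qpos q)
  have hl : ((j : ℕ) + p.1.val) % q < q := Nat.mod_lt _ (qpos q)
  set k₀ : Fin q := ⟨((i : ℕ) + p.1.val) % q, hk⟩ with hk0
  set l₀ : Fin q := ⟨((j : ℕ) + p.1.val) % q, hl⟩ with hl0
  have step1 : ((Epauli q p)ᴴ * Epauli q s) i l₀
      = e q (-(((i : ℕ) : ℤ) * (p.2.val : ℤ))) * Epauli q s k₀ l₀ := by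
    rw [Matrix.mul_apply]
    have ht : ∀ k : Fin q, (Epauli q p)ᴴ i k * Epauli q s k l₀
        = if (k : ℕ) = ((i : ℕ) + p.1.val) % q
          then e q (-(((i : ℕ) : ℤ) * (p.2.val : ℤ))) * Epauli q s k l₀ else 0 := by
      intro k
      rw [Matrix.conjTranspose_apply, ← starRingEnd_apply, Epauli_conj]
      split_ifs <;> simp
    rw [Finset.sum_congr rfl (fun k _ => ht k), sum_fin_eq q _ hk]
  have step2 : ((Epauli q p)ᴴ * Epauli q s * Epauli q p) i j
      = e q (-(((i : ℕ) : ℤ) * (p.2.val : ℤ))) * Epauli q s k₀ l₀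
        * e q (((j : ℕ) : ℤ) * (p.2.val : ℤ)) := by
    rw [Matrix.mul_apply]
    have ht : ∀ l : Fin q, ((Epauli q p)ᴴ * Epauli q s) i l * Epauli q p l j
        = if (l : ℕ) = ((j : ℕ) + p.1.val) % q
          then ((Epauli q p)ᴴ * Epauli q s) i l * e q (((j : ℕ) : ℤ) * (p.2.val : ℤ)) else 0 := by
      intro l
      rw [Epauli_apply]
      split_ifs <;> simp
    rw [Finset.sum_congr rfl (fun l _ => ht l), sum_fin_eq q _ hl, step1]
  rw [step2, Matrix.smul_apply, smul_eq_mul, Epauli_apply, Epauli_apply]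
  have hcond : ((k₀ : ℕ) = ((l₀ : ℕ) + s.1.val) % q) ↔ ((i : ℕ) = ((j : ℕ) + s.1.val) % q) := by
    show (((i : ℕ) + p.1.val) % q = (((j : ℕ) + p.1.val) % q + s.1.val) % q) ↔ _
    rw [Nat.mod_add_mod]
    constructor
    · intro h
      have h2 : (((i : ℕ) + p.1.val : ℕ) : ZMod q) = (((j : ℕ) + p.1.val + s.1.val : ℕ) : ZMod q) := by
        rw [ZMod.natCast_eq_natCast_iff']; exact h
      push_cast at h2
      have h3 : ((i : ℕ) : ZMod q) = (((j : ℕ) + s.1.val : ℕ) : ZMod q) := by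
        push_cast
        have := add_right_cancel (a := ((i : ℕ) : ZMod q)) (b := ((p.1.val : ℕ) : ZMod q))
          (c := ((j : ℕ) : ZMod q) + ((s.1.val : ℕ) : ZMod q))
        apply this
        rw [h2]; ring
      rw [ZMod.natCast_eq_natCast_iff'] at h3
      rwa [Nat.mod_eq_of_lt i.isLt] at h3
    · intro h
      have h3 : (((i : ℕ) : ℕ) : ZMod q) = (((j : ℕ) + s.1.val : ℕ) : ZMod q) := by
        rw [ZMod.natCast_eq_natCast_iff', Nat.mod_eq_of_lt i.isLt]; exact h
      have h2 : (((i : ℕ) + p.1.val : ℕ) : ZMod q) = (((j : ℕ) + p.1.val + s.1.val : ℕ) : ZMod q) := by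
        push_cast at h3 ⊢
        rw [h3]; ring
      rw [ZMod.natCast_eq_natCast_iff'] at h2
      exact h2
  by_cases hc : (i : ℕ) = ((j : ℕ) + s.1.val) % q
  · rw [if_pos (hcond.mpr hc), if_pos hc]
    have hd1 : (q : ℤ) ∣ (((j : ℕ) : ℤ) + (s.1.val : ℤ) - ((i : ℕ) : ℤ)) := by
      have hmod : ((i : ℕ)) % q = ((j : ℕ) + s.1.val) % q := by
        rw [Nat.mod_eq_of_lt i.isLt]; exact hc
      have hdvd : (i : ℕ) ≡ ((j : ℕ) + s.1.val) [MOD q] := hmod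
      have hz : ((i : ℕ) : ℤ) ≡ (((j : ℕ) + s.1.val : ℕ) : ℤ) [ZMOD (q : ℤ)] :=
        Int.natCast_modEq_iff.mpr hdvd
      have h4 := Int.ModEq.dvd hz
      push_cast at h4 ⊢
      first
      | exact h4
      | (convert h4 using 1; ring)
    have hd2 : (q : ℤ) ∣ (((l₀ : ℕ) : ℤ) - (((j : ℕ) : ℤ) + (p.1.val : ℤ))) := by
      show (q : ℤ) ∣ (((((j : ℕ) + p.1.val) % q : ℕ) : ℤ) - (((j : ℕ) : ℤ) + (p.1.val : ℤ)))
      have hz := Int.natCast_modEq_iff.mpr (Nat.mod_modEq ((j : ℕ) + p.1.val) q)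
      have h4 := Int.ModEq.dvd hz
      have h5 := dvd_neg.mpr h4
      rw [neg_sub] at h5
      push_cast at h5 ⊢
      first
      | exact h5
      | (convert h5 using 1; ring)
    obtain ⟨k1, hk1⟩ := hd1
    obtain ⟨k2, hk2⟩ := hd2
    rw [← e_add, ← e_add, ← e_add]
    apply e_congr
    refine ⟨(p.2.val : ℤ) * k1 + (s.2.val : ℤ) * k2, ?_⟩
    simp only [sig]
    linear_combination (p.2.val : ℤ) * hk1 + (s.2.val : ℤ) * hk2
  · rw [if_neg (fun h => hc (hcond.mp h)), if_neg hc]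
    simp

lemma sum_all (s : ZMod q × ZMod q) :
    ∑ p : ZMod q × ZMod q, e q (sig q p s) = if s = 0 then ((q : ℂ))^2 else 0 := by
  have hterm : ∀ u t : ZMod q, e q (sig q (u, t) s)
      = e q ((u.val : ℤ) * (s.2.val : ℤ)) * e q ((t.val : ℤ) * (-(s.1.val : ℤ))) := by
    intro u t
    rw [← e_add]
    congr 1
    simp only [sig]
    ring
  rw [Fintype.sum_prod_type, Finset.sum_congr rfl
    (fun u _ => Finset.sum_congr rfl (fun t _ => hterm u t))]
  have hin : ∀ u : ZMod q, ∑ t : ZMod q,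
      e q ((u.val : ℤ) * (s.2.val : ℤ)) * e q ((t.val : ℤ) * (-(s.1.val : ℤ)))
      = e q ((u.val : ℤ) * (s.2.val : ℤ)) * (if (q : ℤ) ∣ (-(s.1.val : ℤ)) then (q : ℂ) else 0) := by
    intro u
    rw [← Finset.mul_sum, char_sum]
  rw [Finset.sum_congr rfl (fun u _ => hin u), ← Finset.sum_mul, char_sum]
  have h2 : ((q : ℤ) ∣ (s.2.val : ℤ)) ↔ s.2 = 0 := by
    rw [Int.natCast_dvd_natCast]
    constructor
    · intro h
      exact (ZMod.val_eq_zero _).mp (Nat.eq_zero_of_dvd_of_lt h (ZMod.val_lt s.2))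
    · intro h; rw [h, ZMod.val_zero]; exact dvd_zero q
  have h1 : ((q : ℤ) ∣ (-(s.1.val : ℤ))) ↔ s.1 = 0 := by
    rw [dvd_neg, Int.natCast_dvd_natCast]
    constructor
    · intro h
      exact (ZMod.val_eq_zero _).mp (Nat.eq_zero_of_dvd_of_lt h (ZMod.val_lt s.1))
    · intro h; rw [h, ZMod.val_zero]; exact dvd_zero q
  rw [if_congr h2 rfl rfl, if_congr h1 rfl rfl]
  by_cases hs2 : s.2 = 0 <;> by_cases hs1 : s.1 = 0 <;>
    simp [Prod.ext_iff, hs1, hs2] <;> ring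

lemma label_sum (s : ZMod q × ZMod q) (w z : ℂ) :
    ∑ p : ZMod q × ZMod q, e q (sig q p s) * (if p = 0 then w else z)
      = if s = 0 then w + ((q : ℂ) ^ 2 - 1) * z else w - z := by
  have hsplit : ∀ p : ZMod q × ZMod q, e q (sig q p s) * (if p = 0 then w else z)
      = e q (sig q p s) * z + (if p = 0 then e q (sig q p s) * (w - z) else 0) := by
    intro p; split_ifs <;> ring
  rw [Finset.sum_congr rfl (fun p _ => hsplit p), Finset.sum_add_distrib, ← Finset.sum_mul,
    sum_all, Finset.sum_ite_eq' Finset.univ (0 : ZMod q × ZMod q)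
      (fun p => e q (sig q p s) * (w - z))]
  have hs0 : sig q (0 : ZMod q × ZMod q) s = 0 := by
    simp [sig, ZMod.val_zero]
  simp only [Finset.mem_univ, if_true, hs0, e_zero, one_mul]
  split_ifs <;> ring

section Tensor

variable {ι : Type} [Fintype ι] [DecidableEq ι]

def tens (A : ι → Matrix (Fin q) (Fin q) ℂ) : Matrix (ι → Fin q) (ι → Fin q) ℂ :=
  fun v w => ∏ i, A i (v i) (w i)

omit [NeZero q] in
lemma tens_mul (A B : ι → Matrix (Fin q) (Fin q) ℂ) :
    tens q A * tens q B = tens q (fun i => A i * B i) := by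
  ext v w
  rw [Matrix.mul_apply]
  show _ = ∏ i, (A i * B i) (v i) (w i)
  simp only [Matrix.mul_apply]
  rw [Fintype.prod_sum (fun i k => A i (v i) k * B i k (w i))]
  apply Finset.sum_congr rfl
  intro u _
  show (∏ i, A i (v i) (u i)) * ∏ i, B i (u i) (w i) = _
  rw [← Finset.prod_mul_distrib]

omit [NeZero q] in
lemma tens_conj (A : ι → Matrix (Fin q) (Fin q) ℂ) :
    (tens q A)ᴴ = tens q (fun i => (A i)ᴴ) := by
  ext v w
  show star (∏ i, A i (w i) (v i)) = ∏ i, star (A i (w i) (v i))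
  exact star_prod _ _

omit [NeZero q] in
lemma tens_smul (c : ι → ℂ) (A : ι → Matrix (Fin q) (Fin q) ℂ) :
    tens q (fun i => c i • A i) = (∏ i, c i) • tens q A := by
  ext v w
  show (∏ i, (c i • A i) (v i) (w i)) = (∏ i, c i) • (∏ i, A i (v i) (w i))
  simp only [Matrix.smul_apply, smul_eq_mul]
  rw [← Finset.prod_mul_distrib]

omit [NeZero q] in
lemma EV_tens (p : ι → ZMod q × ZMod q) : EV q p = tens q (fun i => Epauli q (p i)) := rfl

omit [NeZero q] in
lemma e_sum (f : ι → ℤ) : e q (∑ i, f i) = ∏ i, e q (f i) := by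
  classical
  induction (Finset.univ : Finset ι) using Finset.induction_on with
  | empty => simp [e_zero]
  | insert _ _ h ih =>
    rw [Finset.sum_insert h, Finset.prod_insert h, e_add, ih]

lemma EV_comm (p s : ι → ZMod q × ZMod q) :
    (EV q p)ᴴ * EV q s * EV q p = e q (∑ i, sig q (p i) (s i)) • EV q s := by
  rw [EV_tens, EV_tens, tens_conj, tens_mul, tens_mul]
  have h1 : (fun i => (Epauli q (p i))ᴴ * Epauli q (s i) * Epauli q (p i))
      = fun i => e q (sig q (p i) (s i)) • Epauli q (s i) :=
    funext fun i => comm1 q (p i) (s i)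
  have h2 : (fun i => ((fun i => (Epauli q (p i))ᴴ * Epauli q (s i)) i) * Epauli q (p i))
      = fun i => e q (sig q (p i) (s i)) • Epauli q (s i) := h1
  rw [h2, tens_smul, e_sum]

lemma complet_star (a b v w' : Fin q) :
    ∑ s : ZMod q × ZMod q, star (Epauli q s a b) * Epauli q s v w'
      = if a = v ∧ b = w' then (q : ℂ) else 0 := by
  rw [← complet q a b v w']
  rfl

lemma key_sum (v w : ι → Fin q) (b a : ι → Fin q) :
    ∑ s : ι → ZMod q × ZMod q, star (EV q s b a) * EV q s v w
      = if b = v ∧ a = w then (q : ℂ) ^ (Fintype.card ι) else 0 := by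
  have h1 : ∀ s : ι → ZMod q × ZMod q, star (EV q s b a) * EV q s v w
      = ∏ i, (star (Epauli q (s i) (b i) (a i)) * Epauli q (s i) (v i) (w i)) := by
    intro s
    show star (∏ i, Epauli q (s i) (b i) (a i)) * (∏ i, Epauli q (s i) (v i) (w i)) = _
    rw [star_prod, ← Finset.prod_mul_distrib]
  rw [Finset.sum_congr rfl (fun s _ => h1 s),
    ← Fintype.prod_sum (fun i (s₁ : ZMod q × ZMod q) =>
        star (Epauli q s₁ (b i) (a i)) * Epauli q s₁ (v i) (w i)),
    Finset.prod_congr rfl (fun i _ => complet_star q (b i) (a i) (v i) (w i))]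
  by_cases h : b = v ∧ a = w
  · obtain ⟨hb, ha⟩ := h
    subst hb; subst ha
    simp [Finset.prod_const, Finset.card_univ]
  · rw [if_neg h]
    have hex : ∃ i, ¬ (b i = v i ∧ a i = w i) := by
      by_contra hno
      push_neg at hno
      exact h ⟨funext fun i => (hno i).1, funext fun i => (hno i).2⟩
    obtain ⟨i, hi⟩ := hex
    exact Finset.prod_eq_zero (Finset.mem_univ i) (if_neg hi)

end Tensor


section Main

variable {ι : Type} [Fintype ι] [DecidableEq ι]

lemma expand (M : Matrix (ι → Fin q) (ι → Fin q) ℂ) :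
    ∑ s : ι → ZMod q × ZMod q, (Matrix.trace ((EV q s)ᴴ * M)) • EV q s
      = ((q : ℂ) ^ (Fintype.card ι)) • M := by
  ext v w
  rw [Matrix.sum_apply]
  have htr : ∀ s : ι → ZMod q × ZMod q, Matrix.trace ((EV q s)ᴴ * M)
      = ∑ a, ∑ b, star (EV q s b a) * M b a := by
    intro s
    rw [Matrix.trace]
    simp only [Matrix.diag, Matrix.mul_apply, Matrix.conjTranspose_apply]
  have step : ∀ s : ι → ZMod q × ZMod q, (Matrix.trace ((EV q s)ᴴ * M) • EV q s) v w
      = ∑ a, ∑ b, star (EV q s b a) * EV q s v w * M b a := by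
    intro s
    rw [Matrix.smul_apply, smul_eq_mul, htr s, Finset.sum_mul]
    refine Finset.sum_congr rfl (fun a _ => ?_)
    rw [Finset.sum_mul]
    refine Finset.sum_congr rfl (fun b _ => ?_)
    ring
  rw [Finset.sum_congr rfl (fun s _ => step s), Finset.sum_comm]
  rw [Finset.sum_congr rfl (fun a (_ : a ∈ Finset.univ) => Finset.sum_comm)]
  have hinner : ∀ a b : ι → Fin q, ∑ s : ι → ZMod q × ZMod q,
      star (EV q s b a) * EV q s v w * M b a
      = (if b = v ∧ a = w then (q : ℂ) ^ (Fintype.card ι) else 0) * M b a := by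
    intro a b
    rw [← Finset.sum_mul, key_sum]
  rw [Finset.sum_congr rfl (fun a _ => Finset.sum_congr rfl (fun b _ => hinner a b))]
  have hb : ∀ a : ι → Fin q, ∑ b : ι → Fin q,
      (if b = v ∧ a = w then (q : ℂ) ^ (Fintype.card ι) else 0) * M b a
      = if a = w then (q : ℂ) ^ (Fintype.card ι) * M v a else 0 := by
    intro a
    by_cases ha : a = w
    · subst ha
      simp [ite_mul, Finset.sum_ite_eq']
    · simp [ha]
  rw [Finset.sum_congr rfl (fun a _ => hb a),
    Finset.sum_ite_eq' Finset.univ w (fun a => (q : ℂ) ^ (Fintype.card ι) * M v a)]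
  simp

lemma key_trace (p : ι → ZMod q × ZMod q)
    (M₁ M₂ : Matrix (ι → Fin q) (ι → Fin q) ℂ) :
    ((q : ℂ) ^ (Fintype.card ι)) * Matrix.trace ((EV q p)ᴴ * M₁ * EV q p * M₂)
      = ∑ s : ι → ZMod q × ZMod q, Matrix.trace ((EV q s)ᴴ * M₁) *
          Matrix.trace (EV q s * M₂) * e q (∑ i, sig q (p i) (s i)) := by
  have h0 : ((q : ℂ) ^ (Fintype.card ι)) * Matrix.trace ((EV q p)ᴴ * M₁ * EV q p * M₂)
      = Matrix.trace ((EV q p)ᴴ * (((q : ℂ) ^ (Fintype.card ι)) • M₁) * EV q p * M₂) := by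
    rw [Matrix.mul_smul, Matrix.smul_mul, Matrix.smul_mul, Matrix.trace_smul, smul_eq_mul]
  rw [h0, ← expand q M₁, Matrix.mul_sum, Finset.sum_mul, Finset.sum_mul, Matrix.trace_sum]
  refine Finset.sum_congr rfl (fun s _ => ?_)
  rw [Matrix.mul_smul, Matrix.smul_mul, Matrix.smul_mul, Matrix.trace_smul, smul_eq_mul]
  rw [EV_comm q p s, Matrix.smul_mul, Matrix.trace_smul, smul_eq_mul]
  ring

lemma pow_prod (w z : ℂ) (p : ι → ZMod q × ZMod q) :
    w ^ (Fintype.card ι - wtL q p) * z ^ wtL q p = ∏ i, (if p i = 0 then w else z) := by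
  rw [Finset.prod_ite (fun _ => w) (fun _ => z), Finset.prod_const, Finset.prod_const]
  have h1 : (Finset.univ.filter fun i => ¬ p i = 0).card = wtL q p := rfl
  have h2 : (Finset.univ.filter fun i => p i = 0).card = Fintype.card ι - wtL q p := by
    have := Finset.card_filter_add_card_filter_not
      (s := (Finset.univ : Finset ι)) (p := fun i => p i = 0)
    have h3 : (Finset.univ : Finset ι).card = Fintype.card ι := Finset.card_univ
    rw [← h1]
    omega
  rw [h1, h2]

lemma inner_sum (s : ι → ZMod q × ZMod q) (w z : ℂ) :
    ∑ p : ι → ZMod q × ZMod q,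
      e q (∑ i, sig q (p i) (s i)) * (w ^ (Fintype.card ι - wtL q p) * z ^ wtL q p)
      = (w + ((q : ℂ) ^ 2 - 1) * z) ^ (Fintype.card ι - wtL q s) * (w - z) ^ wtL q s := by
  have hterm : ∀ p : ι → ZMod q × ZMod q,
      e q (∑ i, sig q (p i) (s i)) * (w ^ (Fintype.card ι - wtL q p) * z ^ wtL q p)
      = ∏ i, (e q (sig q (p i) (s i)) * (if p i = 0 then w else z)) := by
    intro p
    rw [Finset.prod_mul_distrib, ← e_sum, ← pow_prod]
  rw [Finset.sum_congr rfl (fun p _ => hterm p),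
    ← Fintype.prod_sum (fun i (p₁ : ZMod q × ZMod q) =>
        e q (sig q p₁ (s i)) * (if p₁ = 0 then w else z)),
    Finset.prod_congr rfl (fun i _ => label_sum q (s i) w z), ← pow_prod]

end Main


end SLaux

open SLaux

/-- Quantum MacWilliams identity for the Shor–Laflamme enumerators:
`B(w,z) = A((w + (q²−1)z)/q, (w−z)/q)`. -/
theorem stmt6 (q n : ℕ) [NeZero q] (hq : 2 ≤ q) (hn : 1 ≤ n)
    (M₁ M₂ : Matrix ((Fin n) → Fin q) ((Fin n) → Fin q) ℂ)
    (hM₁ : M₁.IsHermitian) (hM₂ : M₂.IsHermitian) (w z : ℂ) :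
    enumBhom q n M₁ M₂ w z =
      enumAhom q n M₁ M₂ ((w + ((q : ℂ) ^ 2 - 1) * z) / (q : ℂ)) ((w - z) / (q : ℂ)) := by
  classical
  have hq0 : (q : ℂ) ≠ 0 := Nat.cast_ne_zero.mpr (NeZero.ne q)
  have hqn : ((q : ℂ) ^ n) ≠ 0 := pow_ne_zero _ hq0
  apply mul_left_cancel₀ hqn
  rw [enumBhom, enumAhom, Finset.mul_sum, Finset.mul_sum]
  have hcard : Fintype.card (Fin n) = n := Fintype.card_fin n
  have hL : ∀ p : Fin n → ZMod q × ZMod q,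
      (q : ℂ) ^ n * (Matrix.trace ((EV q p)ᴴ * M₁ * EV q p * M₂) * w ^ (n - wtL q p)
          * z ^ wtL q p)
      = ∑ s : Fin n → ZMod q × ZMod q,
          (Matrix.trace ((EV q s)ᴴ * M₁) * Matrix.trace (EV q s * M₂)) *
            (e q (∑ i, sig q (p i) (s i)) * (w ^ (n - wtL q p) * z ^ wtL q p)) := by
    intro p
    have hk := key_trace q p M₁ M₂
    rw [hcard] at hk
    calc (q : ℂ) ^ n * (Matrix.trace ((EV q p)ᴴ * M₁ * EV q p * M₂) * w ^ (n - wtL q p)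
            * z ^ wtL q p)
        = ((q : ℂ) ^ n * Matrix.trace ((EV q p)ᴴ * M₁ * EV q p * M₂))
            * (w ^ (n - wtL q p) * z ^ wtL q p) := by ring
      _ = (∑ s : Fin n → ZMod q × ZMod q, Matrix.trace ((EV q s)ᴴ * M₁) *
            Matrix.trace (EV q s * M₂) * e q (∑ i, sig q (p i) (s i)))
            * (w ^ (n - wtL q p) * z ^ wtL q p) := by rw [hk]
      _ = _ := by
            rw [Finset.sum_mul]
            exact Finset.sum_congr rfl fun s _ => by ring
  rw [Finset.sum_congr rfl (fun p _ => hL p), Finset.sum_comm]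
  refine Finset.sum_congr rfl (fun s _ => ?_)
  rw [← Finset.mul_sum]
  have hin := inner_sum q s w z
  rw [hcard] at hin
  rw [hin]
  have hwt : wtL q s ≤ n := by
    have h1 := Finset.card_filter_le (Finset.univ : Finset (Fin n)) (fun i => s i ≠ 0)
    have h2 : (Finset.univ : Finset (Fin n)).card = n := by simp
    calc wtL q s ≤ (Finset.univ : Finset (Fin n)).card := h1
      _ = n := h2
  have hsplit : (q : ℂ) ^ n = (q : ℂ) ^ (n - wtL q s) * (q : ℂ) ^ (wtL q s) := by
    rw [← pow_add, Nat.sub_add_cancel hwt]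
  rw [div_pow, div_pow, hsplit]
  field_simp
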